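/- Let (R, m) be a two-dimensional regular local ring, J an integrally closed m-primary ideal of order at least 2 with I = mJ integrally closed, and x, y elements with (x,y) = m and (I : y) = (I : m). Then the module M' generated by the columns of the 2 x (2μ(J)+1) matrix [[J, y, 0],[0, x, J]] (i.e., columns (j, 0) for j in J, the column (y, x), and columns (0, j) for j in J) is an integrally closed R-module of rank two with ideal of maximal minors I(M') = I. -/

import Mathlib

open IsLocalRing

variable {R : Type*} [CommRing R]

/-- `r` lies in the integral closure of the ideal `I`. -/
def MemIntClIdeal (I : Ideal R) (r : R) : Prop :=
  ∃ n : ℕ, 0 < n ∧ ∃ c : ℕ → R, (∀ i, 1 ≤ i → i ≤ n → c i ∈ I ^ i) ∧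
    r ^ n + ∑ i ∈ Finset.Icc 1 n, c i * r ^ (n - i) = 0

/-- An ideal is integrally closed if it contains its integral closure. -/
def IsIntClIdeal (I : Ideal R) : Prop := ∀ r, MemIntClIdeal I r → r ∈ I

/-- Determinant of the 2×2 matrix with columns `v`, `w`. -/
def det2 (v w : Fin 2 → R) : R := v 0 * w 1 - v 1 * w 0

/-- The ideal of maximal minors `I(M)` of a rank-two module `M ⊆ R²`. -/
def minorsIdeal (M : Submodule R (Fin 2 → R)) : Ideal R :=
  Ideal.span {r | ∃ v ∈ M, ∃ w ∈ M, det2 v w = r}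

/-- The ideal `I₁(M)` generated by the entries of a matrix whose columns generate `M`. -/
def entriesIdeal (M : Submodule R (Fin 2 → R)) : Ideal R :=
  Ideal.span {r | ∃ v ∈ M, r = v 0 ∨ r = v 1}

/-- `v` is integral over the module `M` (Rees' determinantal criterion). -/
def MemIntClMod (M : Submodule R (Fin 2 → R)) (v : Fin 2 → R) : Prop :=
  ∀ w ∈ M, MemIntClIdeal (minorsIdeal M) (det2 v w)

/-- `M ⊆ R²` is integrally closed. -/
def IsIntClMod (M : Submodule R (Fin 2 → R)) : Prop :=
  ∀ v, MemIntClMod M v → v ∈ M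

/-- `M` is indecomposable as a direct sum. -/
def IsIndecomposable (M : Submodule R (Fin 2 → R)) : Prop :=
  ∀ N P : Submodule R (Fin 2 → R), N ⊔ P = M → N ⊓ P = ⊥ → N = ⊥ ∨ P = ⊥

/-- `M` has a nonzero free direct summand. -/
def HasFreeSummand (M : Submodule R (Fin 2 → R)) : Prop :=
  ∃ N P : Submodule R (Fin 2 → R), N ⊔ P = M ∧ N ⊓ P = ⊥ ∧ N ≠ ⊥ ∧ Module.Free R N

/-- An ideal is simple if it is not the product of two proper ideals. -/
def IsSimpleIdeal (I : Ideal R) : Prop :=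
  I ≠ ⊤ ∧ ∀ J K : Ideal R, I = J * K → J = ⊤ ∨ K = ⊤

/-- The module generated by the columns of the matrix `[[J, y, 0], [0, x, J]]`. -/
def genMod (J : Ideal R) (x y : R) : Submodule R (Fin 2 → R) :=
  Submodule.span R
    ({v | ∃ j ∈ J, v = ![j, 0]} ∪ {![y, x]} ∪ {v | ∃ j ∈ J, v = ![0, j]})


lemma artinian_of_killed_by_max [IsLocalRing R] {M : Type*} [AddCommGroup M] [Module R M]
    [Module.Finite R M]
    (h : ∀ r ∈ maximalIdeal R, ∀ x : M, r • x = 0) : IsArtinian R M := by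
  have tor : Module.IsTorsionBySet R M (maximalIdeal R : Set R) := fun x a => h a.1 a.2 x
  letI : Module (ResidueField R) M := tor.module
  haveI : IsScalarTower R (ResidueField R) M := tor.isScalarTower
  haveI : Module.Finite (ResidueField R) M :=
    Module.Finite.of_restrictScalars_finite R (ResidueField R) M
  haveI : IsArtinian (ResidueField R) M := isArtinian_of_fg_of_artinian'
  let g : Submodule R M → Submodule (ResidueField R) M := fun N =>
    { carrier := N
      add_mem' := fun ha hb => N.add_mem ha hb
      zero_mem' := N.zero_mem
      smul_mem' := by
        intro c x hx
        obtain ⟨r, rfl⟩ := IsLocalRing.residue_surjective (R := R) c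
        have hr : (IsLocalRing.residue R r) • x = r • x :=
          Module.IsTorsionBySet.mk_smul tor r x
        exact hr ▸ N.smul_mem r hx }
  have hg : StrictMono g := by
    intro N N' hlt
    refine lt_of_le_of_ne (fun x hx => hlt.le hx) (fun he => hlt.ne ?_)
    ext z
    exact ⟨fun hz => (Submodule.ext_iff.mp he z).mp hz,
           fun hz => (Submodule.ext_iff.mp he z).mpr hz⟩
  exact hg.wellFoundedLT

lemma artinian_quotient_of_pow_le [IsNoetherianRing R] [IsLocalRing R]
    (k : ℕ) (N : Ideal R) (hN : maximalIdeal R ^ k ≤ N) : IsArtinian R (R ⧸ N) := by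
  induction k generalizing N with
  | zero =>
    have : N = ⊤ := top_le_iff.mp (by simpa using hN)
    haveI : Subsingleton (R ⧸ N) := by rw [this]; infer_instance
    infer_instance
  | succ k ih =>
    set N' : Ideal R := maximalIdeal R ^ k ⊔ N with hN'
    have hle : N ≤ N' := le_sup_right
    haveI hIH : IsArtinian R (R ⧸ N') := ih N' le_sup_left
    set S : Submodule R (R ⧸ N) := Submodule.map N.mkQ N' with hS
    haveI hSart : IsArtinian R S := by
      haveI : Module.Finite R S := by
        rw [Module.Finite.iff_fg]; exact IsNoetherian.noetherian S
      apply artinian_of_killed_by_max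
      rintro r hr ⟨x, hx⟩
      obtain ⟨u, hu, rfl⟩ := hx
      have hru : r * u ∈ N := by
        obtain ⟨a, ha, b, hb, rfl⟩ := Submodule.mem_sup.mp hu
        rw [mul_add]
        refine N.add_mem (hN ?_) (N.mul_mem_left r hb)
        rw [pow_succ, mul_comm (maximalIdeal R ^ k)]
        exact Ideal.mul_mem_mul hr ha
      apply Subtype.ext
      show r • (N.mkQ u) = 0
      rw [← map_smul, smul_eq_mul]
      exact (Submodule.Quotient.mk_eq_zero N).mpr hru
    have e : ((R ⧸ N) ⧸ S) ≃ₗ[R] R ⧸ N' := Submodule.quotientQuotientEquivQuotient N N' hle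
    haveI : IsArtinian R ((R ⧸ N) ⧸ S) := isArtinian_of_linearEquiv e.symm
    exact (isArtinian_iff_submodule_quotient S).mpr ⟨hSart, this⟩

/-- symbolic power -/
def symb (p : Ideal R) (hp : p.IsPrime) (n : ℕ) : Ideal R where
  carrier := {r | ∃ s, s ∉ p ∧ s * r ∈ p ^ n}
  add_mem' := by
    rintro a b ⟨s, hs, hsa⟩ ⟨t, ht, htb⟩
    refine ⟨s * t, fun hst => ((hp.mem_or_mem hst).elim hs ht), ?_⟩
    have : s * t * (a + b) = t * (s * a) + s * (t * b) := by ring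
    rw [this]
    exact (p ^ n).add_mem ((p ^ n).mul_mem_left t hsa) ((p ^ n).mul_mem_left s htb)
  zero_mem' := ⟨1, fun h => hp.ne_top (Ideal.eq_top_of_unit_mem p 1 1 h (mul_one 1)),
    by simpa using (p ^ n).zero_mem⟩
  smul_mem' := by
    rintro c a ⟨s, hs, hsa⟩
    refine ⟨s, hs, ?_⟩
    have : s * (c • a) = c * (s * a) := by simp [smul_eq_mul]; ring
    rw [this]
    exact (p ^ n).mul_mem_left c hsa

lemma pit_false [IsNoetherianRing R] [IsLocalRing R] [IsDomain R]
    {p : Ideal R} (hp : p.IsPrime) (hp0 : p ≠ ⊥) (hpm : p < maximalIdeal R)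
    {x : R} (hxm : x ∈ maximalIdeal R) {k : ℕ}
    (hk : maximalIdeal R ^ k ≤ Ideal.span {x}) : False := by
  classical
  obtain ⟨z, hzm, hzp⟩ := SetLike.exists_of_lt hpm
  -- x ∉ p
  have hxp : x ∉ p := by
    intro hxp
    apply hzp
    have : z ^ k ∈ p := by
      refine (Ideal.span_singleton_le_iff_mem p).mpr hxp (hk (Ideal.pow_mem_pow hzm k))
    rcases Nat.eq_zero_or_pos k with rfl | hkpos
    · exact absurd (by simpa using this) (by simpa using hp.ne_top ∘ (Ideal.eq_top_iff_one p).mpr)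
    · exact (hp.pow_mem_iff_mem k hkpos).mp this
  set X : Ideal R := Ideal.span {x} with hX
  set P : ℕ → Ideal R := symb p hp with hP
  have hPanti : ∀ n, P (n + 1) ≤ P n := by
    rintro n r ⟨s, hs, hsr⟩
    exact ⟨s, hs, Ideal.pow_le_pow_right (Nat.le_succ n) hsr⟩
  have hpowle : ∀ n, p ^ n ≤ P n := fun n r hr =>
    ⟨1, fun h => hp.ne_top ((Ideal.eq_top_iff_one p).mpr h), by simpa using hr⟩
  have hxcancel : ∀ n c, x * c ∈ P n → c ∈ P n := by
    rintro n c ⟨s, hs, hsc⟩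
    refine ⟨s * x, fun h => (hp.mem_or_mem h).elim hs hxp, ?_⟩
    have : s * x * c = s * (x * c) := by ring
    rwa [this]
  -- stabilization
  haveI := artinian_quotient_of_pow_le k X hk
  have hmono : ∀ {m n : ℕ}, m ≤ n → P n ≤ P m := by
    intro m n h
    induction h with
    | refl => exact le_rfl
    | step h ih => exact le_trans (hPanti _) ih
  let f : ℕ →o (Submodule R (R ⧸ X))ᵒᵈ :=
    ⟨fun n => Submodule.map X.mkQ (P n ⊔ X), fun m n h => Submodule.map_mono (sup_le_sup_right (hmono h) X)⟩
  obtain ⟨n, hn⟩ := IsArtinian.monotone_stabilizes f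
  have hstab : P n ⊔ X = P (n + 1) ⊔ X := by
    have h1 : Submodule.map X.mkQ (P n ⊔ X) = Submodule.map X.mkQ (P (n + 1) ⊔ X) :=
      hn (n + 1) (Nat.le_succ n)
    have h2 := congrArg (Submodule.comap X.mkQ) h1
    simp only [f, OrderHom.coe_mk, Submodule.comap_map_eq, Submodule.ker_mkQ, sup_assoc,
      sup_idem] at h2
    exact h2
  -- Nakayama
  have hsub : P n ≤ P (n + 1) ⊔ X • P n := by
    intro u hu
    have : u ∈ P (n + 1) ⊔ X := hstab ▸ Submodule.mem_sup_left hu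
    obtain ⟨v, hv, w, hw, rfl⟩ := Submodule.mem_sup.mp this
    obtain ⟨c, hc⟩ := Ideal.mem_span_singleton'.mp hw
    have hcw : c * x ∈ P n := by
      have : c * x = v + w - v := by rw [hc]; ring
      rw [this]
      exact (P n).sub_mem hu (hPanti n hv)
    have hcP : c ∈ P n := hxcancel n c (by rwa [mul_comm])
    refine Submodule.add_mem _ (Submodule.mem_sup_left hv) (Submodule.mem_sup_right ?_)
    rw [← hc, Ideal.smul_eq_mul, mul_comm c x]
    exact Ideal.mul_mem_mul (Ideal.mem_span_singleton_self x) hcP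
  have hXjac : X ≤ (⊥ : Ideal R).jacobson := by
    rw [IsLocalRing.jacobson_eq_maximalIdeal ⊥ bot_ne_top]
    exact (Ideal.span_singleton_le_iff_mem _).mpr hxm
  have heq : P n = P (n + 1) :=
    le_antisymm (Submodule.le_of_le_smul_of_le_jacobson_bot (IsNoetherian.noetherian _) hXjac hsub)
      (hPanti n)
  -- determinant trick
  obtain ⟨t, htp, ht0⟩ := (Submodule.ne_bot_iff p).mp hp0
  have htP : t ^ n ∈ P n := hpowle n (Ideal.pow_mem_pow htp n)
  have htn0 : t ^ n ≠ 0 := pow_ne_zero n ht0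
  obtain ⟨T, hT⟩ := IsNoetherian.noetherian (P n)
  have hsel : ∀ a ∈ T, ∃ s, s ∉ p ∧ s * a ∈ p ^ (n + 1) := by
    intro a ha
    have : a ∈ P (n + 1) := heq ▸ hT ▸ Submodule.subset_span ha
    exact this
  choose! sfun hs1 hs2 using hsel
  set s : R := ∏ a ∈ T, sfun a with hs
  have hsp : s ∉ p := by
    intro h
    obtain ⟨a, haT, hap⟩ := Ideal.IsPrime.prod_mem_iff.mp h
    exact hs1 a haT hap
  have hsmul : ∀ u ∈ P n, s * u ∈ p * P n := by
    intro u hu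
    rw [← hT] at hu
    induction hu using Submodule.span_induction with
    | mem a ha =>
      have h1 : sfun a * a ∈ p * P n := by
        have : p ^ (n + 1) ≤ p * P n := by
          rw [pow_succ, mul_comm (p ^ n) p]
          exact Ideal.mul_mono_right (hpowle n)
        exact this (hs2 a ha)
      have : s * a = (∏ b ∈ T.erase a, sfun b) * (sfun a * a) := by
        rw [hs, ← Finset.mul_prod_erase T sfun ha]; ring
      rw [this]
      exact (p * P n).mul_mem_left _ h1
    | zero => simpa using (p * P n).zero_mem
    | add a b _ _ h1 h2 => rw [mul_add]; exact (p * P n).add_mem h1 h2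
    | smul c a _ h1 =>
      have : s * (c • a) = c * (s * a) := by simp [smul_eq_mul]; ring
      rw [this]
      exact (p * P n).mul_mem_left c h1
  -- Cayley-Hamilton
  haveI : Module.Finite R (P n) := by
    rw [Module.Finite.iff_fg]; exact IsNoetherian.noetherian _
  set F : Module.End R (P n) := algebraMap R (Module.End R (P n)) s with hF
  have hrange : LinearMap.range F ≤ p • (⊤ : Submodule R (P n)) := by
    rintro u ⟨v, rfl⟩
    rw [Submodule.mem_smul_top_iff]
    have : (F v : R) = s * (v : R) := by
      rw [hF, Module.algebraMap_end_apply]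
      simp [smul_eq_mul]
    rw [this, Ideal.smul_eq_mul]
    exact hsmul _ v.2
  obtain ⟨q, hmonic, -, hcoeff, heval⟩ :=
    LinearMap.exists_monic_and_coeff_mem_pow_and_aeval_eq_zero_of_range_le_smul R F p hrange
  have hqs : Polynomial.eval s q = 0 := by
    have h1 : Polynomial.aeval F q = algebraMap R (Module.End R (P n)) (Polynomial.eval s q) := by
      rw [hF, Polynomial.aeval_algebraMap_apply]
      rw [Polynomial.coe_aeval_eq_eval]
    rw [h1] at heval
    have h2 := congrArg (fun (g : Module.End R (P n)) => (g ⟨t ^ n, hT ▸ htP⟩ : R)) heval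
    simp only [Module.algebraMap_end_apply] at h2
    have h3 : Polynomial.eval s q * t ^ n = 0 := by
      simpa [smul_eq_mul] using h2
    exact (mul_eq_zero.mp h3).resolve_right htn0
  -- conclude s ∈ p
  have hsd : s ^ q.natDegree ∈ p := by
    have hd : q.coeff q.natDegree = 1 := hmonic.coeff_natDegree
    have hsum := Polynomial.eval_eq_sum_range (p := q) s
    rw [hqs] at hsum
    rw [Finset.sum_range_succ, hd, one_mul] at hsum
    have : s ^ q.natDegree = -∑ i ∈ Finset.range q.natDegree, q.coeff i * s ^ i := by
      linear_combination -hsum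
    rw [this]
    refine Submodule.neg_mem _ (Submodule.sum_mem _ ?_)
    intro i hi
    have : q.coeff i ∈ p ^ (q.natDegree - i) := hcoeff i
    have hlt : i < q.natDegree := Finset.mem_range.mp hi
    have : q.coeff i ∈ p := Ideal.pow_le_self (by omega) this
    exact (p).mul_mem_right _ this
  rcases Nat.eq_zero_or_pos q.natDegree with hdeg | hdeg
  · rw [hdeg, pow_zero] at hsd
    exact hp.ne_top ((Ideal.eq_top_iff_one p).mpr hsd)
  · exact hsp ((hp.pow_mem_iff_mem q.natDegree hdeg).mp hsd)

lemma exists_middle_prime [IsLocalRing R] (hdim : ringKrullDim R = 2) :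
    ∃ p : Ideal R, p.IsPrime ∧ p ≠ ⊥ ∧ p < maximalIdeal R := by
  have hex : ∃ l : LTSeries (PrimeSpectrum R), 2 ≤ l.length := by
    by_contra hno
    push_neg at hno
    have hle : ringKrullDim R ≤ 1 := by
      rw [ringKrullDim, Order.krullDim]
      apply iSup_le
      intro l
      have h1 : l.length ≤ 1 := Nat.lt_succ_iff.mp (hno l)
      exact_mod_cast Nat.cast_le.mpr h1
    rw [hdim] at hle
    norm_num at hle
  obtain ⟨l, hl⟩ := hex
  have h01 : (⟨0, by omega⟩ : Fin (l.length + 1)) < ⟨1, by omega⟩ := by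
    simp [Fin.lt_def]
  have h12 : (⟨1, by omega⟩ : Fin (l.length + 1)) < ⟨2, by omega⟩ := by
    simp [Fin.lt_def]
  have hlt1 : l ⟨0, by omega⟩ < l ⟨1, by omega⟩ := l.strictMono h01
  have hlt2 : l ⟨1, by omega⟩ < l ⟨2, by omega⟩ := l.strictMono h12
  refine ⟨(l ⟨1, by omega⟩).asIdeal, (l ⟨1, by omega⟩).isPrime, ?_, ?_⟩
  · intro hbot
    have : (l ⟨0, by omega⟩).asIdeal < (l ⟨1, by omega⟩).asIdeal := by
      refine lt_of_le_of_ne ((PrimeSpectrum.asIdeal_le_asIdeal _ _).mpr hlt1.le) ?_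
      intro he
      exact hlt1.ne (PrimeSpectrum.ext he)
    rw [hbot] at this
    exact (not_lt_bot this)
  · have hlt2' : (l ⟨1, by omega⟩).asIdeal < (l ⟨2, by omega⟩).asIdeal := by
      refine lt_of_le_of_ne ((PrimeSpectrum.asIdeal_le_asIdeal _ _).mpr hlt2.le) ?_
      intro he
      exact hlt2.ne (PrimeSpectrum.ext he)
    exact lt_of_lt_of_le hlt2' (IsLocalRing.le_maximalIdeal (l ⟨2, by omega⟩).isPrime.ne_top)

lemma colon_x [IsNoetherianRing R] [IsLocalRing R] [IsDomain R]
    {p : Ideal R} (hp : p.IsPrime) (hp0 : p ≠ ⊥) (hpm : p < maximalIdeal R)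
    {x y c : R} (hxy : Ideal.span {x, y} = maximalIdeal R)
    (h : y * c ∈ Ideal.span {x}) : c ∈ Ideal.span {x} := by
  by_contra hc
  classical
  set X := Ideal.span {x} with hXdef
  have hxm : x ∈ maximalIdeal R := hxy ▸ Submodule.subset_span (by simp)
  have hym : y ∈ maximalIdeal R := hxy ▸ Submodule.subset_span (by simp)
  have hXm : X ≤ maximalIdeal R := (Ideal.span_singleton_le_iff_mem _).mpr hxm
  have hXtop : X ≠ ⊤ := fun hh => (maximalIdeal.isMaximal R).ne_top (top_le_iff.mp (hh ▸ hXm))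
  haveI : Nontrivial (R ⧸ X) := Ideal.Quotient.nontrivial_iff.mpr hXtop
  haveI : IsLocalRing (R ⧸ X) :=
    IsLocalRing.of_surjective' (Ideal.Quotient.mk X) Ideal.Quotient.mk_surjective
  set mk : R →+* R ⧸ X := Ideal.Quotient.mk X with hmk
  have hx0 : mk x = 0 := Ideal.Quotient.eq_zero_iff_mem.mpr (Submodule.subset_span (by simp))
  set yb : R ⧸ X := mk y with hyb
  set Y : Ideal (R ⧸ X) := Ideal.span {yb} with hY
  have hQm : maximalIdeal (R ⧸ X) ≤ Y := by
    intro u hu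
    obtain ⟨r, rfl⟩ := Ideal.Quotient.mk_surjective u
    by_contra hrY
    have hrm : r ∉ maximalIdeal R := by
      intro hrm
      obtain ⟨a, b, hab⟩ := Ideal.mem_span_pair.mp (hxy ▸ hrm : r ∈ Ideal.span {x, y})
      apply hrY
      have heq : mk r = mk b * yb := by
        rw [← hab, map_add, map_mul, map_mul, hx0, mul_zero, zero_add, hyb]
      rw [heq]
      exact Ideal.mul_mem_left Y (mk b) (Ideal.subset_span (by simp))
    have hr : IsUnit r := by
      by_contra hnr
      exact hrm ((IsLocalRing.mem_maximalIdeal r).mpr hnr)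
    exact (IsLocalRing.mem_maximalIdeal _).mp hu (hr.map mk)
  have hYtop : Y ≠ ⊤ := by
    intro htop
    obtain ⟨u, hu⟩ := isUnit_iff_exists_inv.mp (Ideal.span_singleton_eq_top.mp htop)
    obtain ⟨w, rfl⟩ := Ideal.Quotient.mk_surjective u
    have h0 : mk (y * w - 1) = 0 := by
      rw [map_sub, map_mul, map_one, ← hyb, hu, sub_self]
    have h1m : (1 : R) ∈ maximalIdeal R := by
      have : y * w - 1 ∈ X := Ideal.Quotient.eq_zero_iff_mem.mp h0
      have := hXm this
      have h2 : y * w ∈ maximalIdeal R := Ideal.mul_mem_right w _ hym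
      simpa using (maximalIdeal R).sub_mem h2 this
    exact (maximalIdeal.isMaximal R).ne_top ((Ideal.eq_top_iff_one _).mpr h1m)
  have hKrull : ⨅ i, Y ^ i = ⊥ := Ideal.iInf_pow_eq_bot_of_isLocalRing Y hYtop
  have hcb : mk c ≠ 0 := fun hh => hc (Ideal.Quotient.eq_zero_iff_mem.mp hh)
  have hex : ∃ n, mk c ∉ Y ^ (n + 1) := by
    by_contra hall
    push_neg at hall
    apply hcb
    rw [← Submodule.mem_bot (R := R ⧸ X), ← hKrull]
    refine Ideal.mem_iInf.mpr fun i => ?_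
    cases i with
    | zero => simp
    | succ m => exact hall m
  set n := Nat.find hex with hn
  have h2 : mk c ∉ Y ^ (n + 1) := Nat.find_spec hex
  have h1 : mk c ∈ Y ^ n := by
    rcases Nat.eq_zero_or_eq_succ_pred n with h | h
    · rw [h]; simp
    · by_contra hn1
      have hlt : n - 1 < n := by omega
      exact Nat.find_min hex hlt (by rwa [(by omega : n - 1 + 1 = n)])
  obtain ⟨d, hd⟩ := Ideal.mem_span_singleton'.mp
    (by rwa [hY, Ideal.span_singleton_pow] at h1)
  have hybc : yb * mk c = 0 := by
    rw [hyb, ← map_mul]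
    exact Ideal.Quotient.eq_zero_iff_mem.mpr h
  have hdu : IsUnit d := by
    by_contra hdu
    have hdY : d ∈ Y := hQm ((IsLocalRing.mem_maximalIdeal d).mpr hdu)
    obtain ⟨e, he⟩ := Ideal.mem_span_singleton'.mp hdY
    apply h2
    rw [hY, Ideal.span_singleton_pow]
    refine Ideal.mem_span_singleton'.mpr ⟨e, ?_⟩
    rw [← hd, ← he, pow_succ]
    ring
  have hyb0 : yb ^ (n + 1) = 0 := by
    have h3 : d * yb ^ (n + 1) = 0 := by
      have : d * yb ^ (n + 1) = yb * (d * yb ^ n) := by rw [pow_succ]; ring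
      rw [this, hd, hybc]
    exact (IsUnit.mul_right_eq_zero hdu).mp h3
  have hmap : Ideal.map mk (maximalIdeal R) = Y := by
    rw [← hxy, Ideal.map_span, Set.image_insert_eq, Set.image_singleton, hx0,
      Ideal.span_insert]
    rw [show (Ideal.span {(0 : R ⧸ X)}) = ⊥ from Ideal.span_singleton_eq_bot.mpr rfl, bot_sup_eq]
  have hmpow : maximalIdeal R ^ (n + 1) ≤ X := by
    intro w hw
    have hmem : mk w ∈ Y ^ (n + 1) := by
      rw [← hmap, ← Ideal.map_pow]
      exact Ideal.mem_map_of_mem mk hw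
    rw [hY, Ideal.span_singleton_pow, hyb0,
      show (Ideal.span {(0 : R ⧸ X)}) = ⊥ from Ideal.span_singleton_eq_bot.mpr rfl] at hmem
    exact Ideal.Quotient.eq_zero_iff_mem.mp ((Submodule.mem_bot _).mp hmem)
  exact pit_false hp hp0 hpm hxm hmpow

-- AUX LEMMAS (to be inserted above stmt8)
section Aux

lemma det2_add_left (u v w : Fin 2 → R) : det2 (u + v) w = det2 u w + det2 v w := by
  simp [det2]; ring

lemma det2_smul_left (r : R) (u w : Fin 2 → R) : det2 (r • u) w = r * det2 u w := by
  simp [det2]; ring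

lemma det2_zero_left (w : Fin 2 → R) : det2 0 w = 0 := by simp [det2]

lemma det2_add_right (u v w : Fin 2 → R) : det2 u (v + w) = det2 u v + det2 u w := by
  simp [det2]; ring

lemma det2_smul_right (r : R) (u w : Fin 2 → R) : det2 u (r • w) = r * det2 u w := by
  simp [det2]; ring

lemma det2_zero_right (u : Fin 2 → R) : det2 u 0 = 0 := by simp [det2]

lemma mem_genMod_col1 {J : Ideal R} {x y j : R} (hj : j ∈ J) : ![j, 0] ∈ genMod J x y :=
  Submodule.subset_span (Or.inl (Or.inl ⟨j, hj, rfl⟩))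

lemma mem_genMod_mid {J : Ideal R} {x y : R} : ![y, x] ∈ genMod J x y :=
  Submodule.subset_span (Or.inl (Or.inr rfl))

lemma mem_genMod_col2 {J : Ideal R} {x y j : R} (hj : j ∈ J) : ![0, j] ∈ genMod J x y :=
  Submodule.subset_span (Or.inr ⟨j, hj, rfl⟩)

lemma minors_genMod_eq [IsLocalRing R] {J : Ideal R} (hord : J ≤ maximalIdeal R ^ 2)
    {x y : R} (hxy : Ideal.span {x, y} = maximalIdeal R) :
    minorsIdeal (genMod J x y) = maximalIdeal R * J := by
  have hxm : x ∈ maximalIdeal R := hxy ▸ Submodule.subset_span (by simp)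
  have hym : y ∈ maximalIdeal R := hxy ▸ Submodule.subset_span (by simp)
  have hJm : J ≤ maximalIdeal R := le_trans hord (Ideal.pow_le_self (by norm_num))
  apply le_antisymm
  · -- minors ≤ mJ
    rw [minorsIdeal, Ideal.span_le]
    rintro r ⟨v, hv, w, hw, rfl⟩
    set I := maximalIdeal R * J with hI
    -- base case : generators
    have base : ∀ v ∈ ({v | ∃ j ∈ J, v = ![j, 0]} ∪ {![y, x]} ∪ {v | ∃ j ∈ J, v = ![0, j]} :
        Set (Fin 2 → R)), ∀ w ∈ ({v | ∃ j ∈ J, v = ![j, 0]} ∪ {![y, x]} ∪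
        {v | ∃ j ∈ J, v = ![0, j]} : Set (Fin 2 → R)), det2 v w ∈ I := by
      rintro v (( ⟨j, hj, rfl⟩ | rfl) | ⟨j, hj, rfl⟩) w ((⟨j', hj', rfl⟩ | rfl) | ⟨j', hj', rfl⟩)
      · have : det2 ![j, 0] ![j', 0] = 0 := by simp only [det2, Matrix.cons_val_zero, Matrix.cons_val_one, Matrix.head_cons]; ring
        rw [this]; exact I.zero_mem
      · have : det2 ![j, 0] ![y, x] = x * j := by simp only [det2, Matrix.cons_val_zero, Matrix.cons_val_one, Matrix.head_cons]; ring
        rw [this]; exact Ideal.mul_mem_mul hxm hj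
      · have : det2 ![j, 0] ![0, j'] = j * j' := by simp only [det2, Matrix.cons_val_zero, Matrix.cons_val_one, Matrix.head_cons]; ring
        rw [this]; exact Ideal.mul_mem_mul (hJm hj) hj'
      · have : det2 ![y, x] ![j', 0] = -(x * j') := by simp only [det2, Matrix.cons_val_zero, Matrix.cons_val_one, Matrix.head_cons]; ring
        rw [this]; exact I.neg_mem (Ideal.mul_mem_mul hxm hj')
      · have : det2 ![y, x] ![y, x] = 0 := by simp only [det2, Matrix.cons_val_zero, Matrix.cons_val_one, Matrix.head_cons]; ring
        rw [this]; exact I.zero_mem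
      · have : det2 ![y, x] ![0, j'] = y * j' := by simp only [det2, Matrix.cons_val_zero, Matrix.cons_val_one, Matrix.head_cons]; ring
        rw [this]; exact Ideal.mul_mem_mul hym hj'
      · have : det2 ![0, j] ![j', 0] = -(j' * j) := by simp only [det2, Matrix.cons_val_zero, Matrix.cons_val_one, Matrix.head_cons]; ring
        rw [this]; exact I.neg_mem (Ideal.mul_mem_mul (hJm hj') hj)
      · have : det2 ![0, j] ![y, x] = -(y * j) := by simp only [det2, Matrix.cons_val_zero, Matrix.cons_val_one, Matrix.head_cons]; ring
        rw [this]; exact I.neg_mem (Ideal.mul_mem_mul hym hj)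
      · have : det2 ![0, j] ![0, j'] = 0 := by simp only [det2, Matrix.cons_val_zero, Matrix.cons_val_one, Matrix.head_cons]; ring
        rw [this]; exact I.zero_mem
    -- extend by bilinearity
    have main : ∀ v ∈ genMod J x y, ∀ w ∈ genMod J x y, det2 v w ∈ I := by
      intro v hv
      induction hv using Submodule.span_induction with
      | mem v hvS =>
        intro w hw
        induction hw using Submodule.span_induction with
        | mem w hwS => exact base v hvS w hwS
        | zero => rw [det2_zero_right]; exact I.zero_mem
        | add a b _ _ h1 h2 => rw [det2_add_right]; exact I.add_mem h1 h2
        | smul r a _ h1 => rw [det2_smul_right]; exact I.mul_mem_left r h1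
      | zero => intro w hw; rw [det2_zero_left]; exact I.zero_mem
      | add a b _ _ h1 h2 =>
        intro w hw
        rw [det2_add_left]; exact I.add_mem (h1 w hw) (h2 w hw)
      | smul r a _ h1 =>
        intro w hw
        rw [det2_smul_left]; exact I.mul_mem_left r (h1 w hw)
    exact main v hv w hw
  · -- mJ ≤ minors
    rw [Ideal.mul_le]
    intro r hr j hj
    obtain ⟨a, b, hab⟩ := Ideal.mem_span_pair.mp (hxy ▸ hr : r ∈ Ideal.span {x, y})
    have hxj : x * j ∈ minorsIdeal (genMod J x y) := by
      refine Ideal.subset_span ⟨![j, 0], mem_genMod_col1 hj, ![y, x], mem_genMod_mid, ?_⟩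
      simp only [det2, Matrix.cons_val_zero, Matrix.cons_val_one, Matrix.head_cons]; ring
    have hyj : y * j ∈ minorsIdeal (genMod J x y) := by
      refine Ideal.subset_span ⟨![y, x], mem_genMod_mid, ![0, j], mem_genMod_col2 hj, ?_⟩
      simp only [det2, Matrix.cons_val_zero, Matrix.cons_val_one, Matrix.head_cons]; ring
    have : r * j = a * (x * j) + b * (y * j) := by rw [← hab]; ring
    rw [this]
    exact Submodule.add_mem _ (Ideal.mul_mem_left _ a hxj) (Ideal.mul_mem_left _ b hyj)

end Aux


theorem stmt8 [IsNoetherianRing R] [IsLocalRing R] [IsDomain R]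
    [Infinite (ResidueField R)]
    (hdim : ringKrullDim R = 2)
    (hreg : ∃ x' y' : R, maximalIdeal R = Ideal.span {x', y'})
    (J : Ideal R) (hicl : IsIntClIdeal J) (hprim : J.radical = maximalIdeal R)
    (hord : J ≤ maximalIdeal R ^ 2)
    (hIicl : IsIntClIdeal (maximalIdeal R * J))
    (x y : R) (hxy : Ideal.span {x, y} = maximalIdeal R)
    (hcol : (maximalIdeal R * J).colon (Ideal.span {y}) =
      (maximalIdeal R * J).colon (maximalIdeal R)) :
    IsIntClMod (genMod J x y) ∧
      minorsIdeal (genMod J x y) = maximalIdeal R * J ∧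
      minorsIdeal (genMod J x y) ≠ ⊥ := by
  classical
  obtain ⟨pI, hpI, hpI0, hpIm⟩ := exists_middle_prime hdim
  have hmeq : minorsIdeal (genMod J x y) = maximalIdeal R * J := minors_genMod_eq hord hxy
  have hxm : x ∈ maximalIdeal R := hxy ▸ Submodule.subset_span (by simp)
  have hym : y ∈ maximalIdeal R := hxy ▸ Submodule.subset_span (by simp)
  have hpIlt : (⊥ : Ideal R) < pI := bot_lt_iff_ne_bot.mpr hpI0
  -- x ≠ 0
  have hx0 : x ≠ 0 := by
    intro h0
    have hm : maximalIdeal R = Ideal.span {y} := by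
      rw [← hxy, h0, Ideal.span_insert,
        show (Ideal.span {(0 : R)}) = ⊥ from Ideal.span_singleton_eq_bot.mpr rfl, bot_sup_eq]
    exact pit_false hpI hpI0 hpIm hym (k := 1) (by rw [pow_one, hm])
  -- J ≠ ⊥ and maximal ideal ≠ ⊥
  have hJ0 : J ≠ ⊥ := by
    intro h0
    rw [h0] at hprim
    have : x ∈ (⊥ : Ideal R).radical := hprim ▸ hxm
    obtain ⟨n, hn⟩ := this
    exact hx0 ((pow_eq_zero_iff'.mp ((Submodule.mem_bot R).mp hn)).1)
  refine ⟨?_, hmeq, ?_⟩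
  · -- integrally closed
    intro v hv
    have h1 : det2 v ![y, x] ∈ maximalIdeal R * J :=
      hIicl _ (hmeq ▸ hv ![y, x] mem_genMod_mid)
    have h1' : v 0 * x - v 1 * y ∈ maximalIdeal R * J := by
      have : det2 v ![y, x] = v 0 * x - v 1 * y := by simp [det2]
      rwa [this] at h1
    have hdec : maximalIdeal R * J = Ideal.span {x} * J ⊔ Ideal.span {y} * J := by
      rw [← hxy, Ideal.span_insert, Ideal.sup_mul]
    rw [hdec] at h1'
    obtain ⟨z1, hz1, z2, hz2, hsum⟩ := Submodule.mem_sup.mp h1'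
    obtain ⟨j₁, hj₁, hxj₁⟩ := Ideal.mem_span_singleton_mul.mp hz1
    obtain ⟨j₂, hj₂, hyj₂⟩ := Ideal.mem_span_singleton_mul.mp hz2
    have hsum' : v 0 * x - v 1 * y = x * j₁ + y * j₂ := by rw [hxj₁, hyj₂, hsum]
    have hcx : y * (v 1 + j₂) ∈ Ideal.span {x} :=
      Ideal.mem_span_singleton'.mpr ⟨v 0 - j₁, by linear_combination hsum'⟩
    obtain ⟨r, hr⟩ := Ideal.mem_span_singleton'.mp (colon_x hpI hpI0 hpIm hxy hcx)
    have hv0 : v 0 = j₁ + r * y := by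
      have hz : x * (v 0 - j₁ - r * y) = 0 := by linear_combination hsum' - y * hr
      rcases mul_eq_zero.mp hz with h | h
      · exact absurd h hx0
      · linear_combination h
    have hv1 : v 1 - r * x = -j₂ := by linear_combination -hr
    have hveq : v = ![j₁, 0] + r • ![y, x] + ![0, -j₂] := by
      funext i
      fin_cases i
      · show v 0 = _
        simp only [Fin.zero_eta, Fin.isValue, Pi.add_apply, Pi.smul_apply, Matrix.cons_val_zero, smul_eq_mul]
        linear_combination hv0
      · show v 1 = _
        simp only [Fin.mk_one, Fin.isValue, Pi.add_apply, Pi.smul_apply, Matrix.cons_val_one,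
          Matrix.head_cons, smul_eq_mul, Matrix.cons_val_zero]
        linear_combination -hr
    rw [hveq]
    exact Submodule.add_mem _
      (Submodule.add_mem _ (mem_genMod_col1 hj₁)
        (Submodule.smul_mem _ r mem_genMod_mid))
      (mem_genMod_col2 (J.neg_mem hj₂))
  · -- nonzero
    rw [hmeq]
    intro h0
    obtain ⟨b, hbJ, hb0⟩ := (Submodule.ne_bot_iff J).mp hJ0
    have : x * b ∈ maximalIdeal R * J := Ideal.mul_mem_mul hxm hbJ
    rw [h0] at this
    exact (mul_ne_zero hx0 hb0) ((Submodule.mem_bot R).mp this)
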